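/- Define δ₁(P) = -(e^P(P² - 6P + 12) - (P² + 6P + 12))/(e^P(2-P) - (P+2)). Then δ₁(P) > 0 for all P, and δ₁(P)/|P| → 1 as |P| → ∞. -/

import Mathlib

open Filter Topology

/-- δ₁, defined by continuous extension at the removable singularity P = 0. -/
noncomputable def δ₁ (P : ℝ) : ℝ :=
    if P = 0 then 6 else
      -(Real.exp P * (P ^ 2 - 6 * P + 12) - (P ^ 2 + 6 * P + 12)) /
        (Real.exp P * (2 - P) - (P + 2))

private lemma Dneg {P : ℝ} (hP : 0 < P) : Real.exp P * (2 - P) - (P + 2) < 0 := by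
  have key : ∀ x : ℝ, 0 < x → Real.exp x * (1 - x) < 1 := by
    intro x hx
    have h1 : Real.exp x * Real.exp (-x) = 1 := by
      rw [← Real.exp_add]; simp
    have h2 : 1 - x < Real.exp (-x) := by
      have := Real.add_one_lt_exp (x := -x) (by linarith)
      linarith
    nlinarith [Real.exp_pos x]
  set f : ℝ → ℝ := fun x => Real.exp x * (2 - x) - (x + 2) with hf
  have hderiv : ∀ x : ℝ, HasDerivAt f (Real.exp x * (1 - x) - 1) x := by
    intro x
    have h1 : HasDerivAt (fun x : ℝ => Real.exp x * (2 - x))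
        (Real.exp x * (2 - x) + Real.exp x * (-1)) x :=
      (Real.hasDerivAt_exp x).mul ((hasDerivAt_id x).const_sub 2)
    have h2 : HasDerivAt (fun x : ℝ => x + 2) 1 x := (hasDerivAt_id x).add_const 2
    have h3 := h1.sub h2
    rw [show Real.exp x * (1 - x) - 1 = Real.exp x * (2 - x) + Real.exp x * (-1) - 1 by ring]
    exact h3
  have anti : StrictAntiOn f (Set.Ici 0) := by
    apply strictAntiOn_of_deriv_neg (convex_Ici 0)
    · exact Continuous.continuousOn (by continuity)
    · intro x hx
      rw [interior_Ici, Set.mem_Ioi] at hx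
      rw [(hderiv x).deriv]
      have := key x hx
      linarith
  have h := anti Set.self_mem_Ici (Set.mem_Ici.mpr hP.le) hP
  simpa [hf] using h

private lemma Gpos {P : ℝ} (hP : 0 < P) :
    0 < Real.exp P * (P ^ 2 - 6 * P + 12) - (P ^ 2 + 6 * P + 12) := by
  have hsum := Real.sum_le_exp_of_nonneg hP.le 6
  have hs : 1 + P + P ^ 2 / 2 + P ^ 3 / 6 + P ^ 4 / 24 + P ^ 5 / 120 ≤ Real.exp P := by
    have : ∑ i ∈ Finset.range 6, P ^ i / (Nat.factorial i) =
        1 + P + P ^ 2 / 2 + P ^ 3 / 6 + P ^ 4 / 24 + P ^ 5 / 120 := by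
      simp [Finset.sum_range_succ, Nat.factorial]
      try ring
    linarith [this ▸ hsum]
  have hq : (0:ℝ) < P ^ 2 - 6 * P + 12 := by nlinarith [sq_nonneg (P - 3)]
  have h7 : (0:ℝ) < P ^ 2 - P + 2 := by nlinarith [sq_nonneg (2 * P - 1)]
  nlinarith [mul_le_mul_of_nonneg_right hs hq.le, mul_pos (pow_pos hP 5) h7]

private lemma even_pos {P : ℝ} (hP : 0 < P) : δ₁ (-P) = δ₁ P := by
  have hD : Real.exp P * (2 - P) - (P + 2) ≠ 0 := (Dneg hP).ne
  have hE : Real.exp P ≠ 0 := Real.exp_ne_zero P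
  have hD2 : Real.exp (-P) * (2 - -P) - (-P + 2) ≠ 0 := by
    have : Real.exp (-P) * (2 - -P) - (-P + 2)
        = -Real.exp (-P) * (Real.exp P * (2 - P) - (P + 2)) := by
      rw [Real.exp_neg]
      field_simp
      ring
    rw [this]
    exact mul_ne_zero (neg_ne_zero.mpr (Real.exp_ne_zero _)) hD
  unfold δ₁
  rw [if_neg (neg_ne_zero.mpr hP.ne'), if_neg hP.ne', div_eq_div_iff hD2 hD]
  rw [Real.exp_neg]
  field_simp
  ring

private lemma delta1_even (P : ℝ) : δ₁ (-P) = δ₁ P := by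
  rcases lt_trichotomy P 0 with h | rfl | h
  · have := even_pos (neg_pos.mpr h)
    rw [neg_neg] at this
    exact this.symm
  · simp
  · exact even_pos h

private lemma delta1_pos (P : ℝ) : 0 < δ₁ P := by
  rcases lt_trichotomy P 0 with h | rfl | h
  · rw [← delta1_even P, ← neg_neg P] at *
    set Q := -P with hQ
    have hQ0 : 0 < Q := by simpa [hQ] using neg_pos.mpr h
    rw [show δ₁ (- -Q) = δ₁ Q by rw [neg_neg]]
    unfold δ₁
    rw [if_neg hQ0.ne']
    exact div_pos_of_neg_of_neg (by linarith [Gpos hQ0]) (Dneg hQ0)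
  · simp [δ₁]
  · unfold δ₁
    rw [if_neg h.ne']
    exact div_pos_of_neg_of_neg (by linarith [Gpos h]) (Dneg h)

private lemma tendsto_top : Tendsto (fun P => δ₁ P / |P|) atTop (𝓝 1) := by
  have hinv : Tendsto (fun P : ℝ => P⁻¹) atTop (𝓝 0) := tendsto_inv_atTop_zero
  have hexp : Tendsto (fun P : ℝ => Real.exp (-P)) atTop (𝓝 0) :=
    Real.tendsto_exp_neg_atTop_nhds_zero
  have hpair : Tendsto (fun P : ℝ => (P⁻¹, Real.exp (-P))) atTop (𝓝 ((0:ℝ), (0:ℝ))) :=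
    hinv.prodMk_nhds hexp
  have hsq : Tendsto (fun P : ℝ => P⁻¹ ^ 2) atTop (𝓝 0) := by
    have := hinv.pow 2
    convert this using 2
    norm_num
  have t1 : Tendsto (fun P : ℝ => -(1 - 6 * P⁻¹ + 12 * P⁻¹ ^ 2)) atTop (𝓝 (-1)) := by
    have h := (((hinv.const_mul 6).const_sub 1).add (hsq.const_mul 12)).neg
    convert h using 2
    norm_num
  have t2 : Tendsto (fun P : ℝ => 1 + 6 * P⁻¹ + 12 * P⁻¹ ^ 2) atTop (𝓝 1) := by
    have h := ((hinv.const_mul 6).const_add 1).add (hsq.const_mul 12)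
    convert h using 2
    norm_num
  have hnum : Tendsto (fun P : ℝ =>
      -(1 - 6 * P⁻¹ + 12 * P⁻¹ ^ 2) + Real.exp (-P) * (1 + 6 * P⁻¹ + 12 * P⁻¹ ^ 2))
      atTop (𝓝 (-1)) := by
    have h := t1.add (hexp.mul t2)
    convert h using 2
    norm_num
  have hden : Tendsto (fun P : ℝ =>
      (2 * P⁻¹ - 1) - Real.exp (-P) * (1 + 2 * P⁻¹)) atTop (𝓝 (-1)) := by
    have t3 : Tendsto (fun P : ℝ => 2 * P⁻¹ - 1) atTop (𝓝 (-1)) := by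
      have h := (hinv.const_mul 2).sub_const 1
      convert h using 2
      norm_num
    have t4 : Tendsto (fun P : ℝ => 1 + 2 * P⁻¹) atTop (𝓝 1) := by
      have h := (hinv.const_mul 2).const_add 1
      convert h using 2
      norm_num
    have h := t3.sub (hexp.mul t4)
    convert h using 2
    norm_num
  have hdiv := hnum.div hden (by norm_num)
  rw [show ((-1:ℝ) / (-1:ℝ)) = 1 by norm_num] at hdiv
  apply hdiv.congr'
  filter_upwards [eventually_gt_atTop 0] with P hP
  have hD : Real.exp P * (2 - P) - (P + 2) ≠ 0 := (Dneg hP).ne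
  have hE : Real.exp P ≠ 0 := Real.exp_ne_zero P
  rw [abs_of_pos hP]
  unfold δ₁
  rw [if_neg hP.ne']
  simp only [Pi.div_apply]
  rw [Real.exp_neg]
  have hnum_eq : -(1 - 6 * P⁻¹ + 12 * P⁻¹ ^ 2) + (Real.exp P)⁻¹ * (1 + 6 * P⁻¹ + 12 * P⁻¹ ^ 2)
      = -(Real.exp P * (P ^ 2 - 6 * P + 12) - (P ^ 2 + 6 * P + 12)) * (Real.exp P)⁻¹ * (P⁻¹) ^ 2 := by
    field_simp
    ring
  have hden_eq : 2 * P⁻¹ - 1 - (Real.exp P)⁻¹ * (1 + 2 * P⁻¹)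
      = (Real.exp P * (2 - P) - (P + 2)) * (Real.exp P)⁻¹ * P⁻¹ := by
    field_simp
  rw [hnum_eq, hden_eq, div_div]
  have hPne : P ≠ 0 := hP.ne'
  field_simp

theorem delta1_pos_and_asymptotics :
    (∀ P : ℝ, 0 < δ₁ P) ∧
    Tendsto (fun P => δ₁ P / |P|) atTop (𝓝 1) ∧
    Tendsto (fun P => δ₁ P / |P|) atBot (𝓝 1) := by
  refine ⟨delta1_pos, tendsto_top, ?_⟩
  have h2 := tendsto_top.comp tendsto_neg_atBot_atTop
  exact h2.congr fun P => by simp [Function.comp, delta1_even, abs_neg]
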